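/- For all lists σ1 and σ2 over an alphabet A, the minimum length of a common supersequence of σ1 and σ2 plus the maximum length of a common subsequence of σ1 and σ2 equals |σ1| + |σ2|. (Both extrema exist: σ1 ++ σ2 is a common supersequence, the empty list is a common subsequence, and lengths of common subsequences are bounded by min(|σ1|, |σ2|).) -/

import Mathlib

lemma cons_sublist_decomp {A : Type*} {x : A} {c σ : List A} (h : (x :: c).Sublist σ) :
    ∃ p s, σ = p ++ x :: s ∧ c.Sublist s := by
  induction σ with
  | nil => simp at h
  | cons a σ ih =>
    rcases h with _ | h | h
    case cons h =>
      obtain ⟨p, s, rfl, hc⟩ := ih h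
      exact ⟨a :: p, s, rfl, hc⟩
    case cons_cons =>
      exact ⟨[], σ, rfl, by assumption⟩

/-- From a common subsequence, build a supersequence of complementary length. -/
lemma merge_along {A : Type*} (c : List A) : ∀ (σ1 σ2 : List A),
    c.Sublist σ1 → c.Sublist σ2 →
    ∃ τ : List A, σ1.Sublist τ ∧ σ2.Sublist τ ∧
      τ.length + c.length = σ1.length + σ2.length := by
  induction c with
  | nil =>
    intro σ1 σ2 _ _
    exact ⟨σ1 ++ σ2, List.sublist_append_left _ _, List.sublist_append_right _ _, by simp⟩
  | cons x c ih =>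
    intro σ1 σ2 h1 h2
    obtain ⟨p1, s1, rfl, hc1⟩ := cons_sublist_decomp h1
    obtain ⟨p2, s2, rfl, hc2⟩ := cons_sublist_decomp h2
    obtain ⟨τ', hτ1, hτ2, hlen⟩ := ih s1 s2 hc1 hc2
    refine ⟨p1 ++ p2 ++ x :: τ', ?_, ?_, ?_⟩
    · rw [List.append_assoc]
      exact (List.Sublist.refl p1).append
        ((hτ1.cons₂ x).trans (List.sublist_append_right p2 _))
    · rw [List.append_assoc]
      exact ((List.Sublist.refl p2).append (hτ2.cons₂ x)).trans
        (List.sublist_append_right p1 _)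
    · simp only [List.length_append, List.length_cons, hlen]; omega

/-- From a common supersequence, extract a subsequence of complementary length. -/
lemma extract_common {A : Type*} : ∀ (τ σ1 σ2 : List A),
    σ1.Sublist τ → σ2.Sublist τ →
    ∃ c : List A, c.Sublist σ1 ∧ c.Sublist σ2 ∧
      σ1.length + σ2.length ≤ τ.length + c.length := by
  intro τ
  induction τ with
  | nil =>
    intro σ1 σ2 h1 h2
    simp only [List.sublist_nil] at h1 h2
    subst h1; subst h2
    exact ⟨[], List.Sublist.refl _, List.Sublist.refl _, by simp⟩
  | cons a τ ih =>
    intro σ1 σ2 h1 h2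
    rcases List.sublist_cons_iff.mp h1 with h1' | ⟨r1, rfl, h1'⟩
    · rcases List.sublist_cons_iff.mp h2 with h2' | ⟨r2, rfl, h2'⟩
      · obtain ⟨c, hc1, hc2, hle⟩ := ih σ1 σ2 h1' h2'
        exact ⟨c, hc1, hc2, by simp; omega⟩
      · obtain ⟨c, hc1, hc2, hle⟩ := ih σ1 r2 h1' h2'
        exact ⟨c, hc1, hc2.cons a, by simp at hle ⊢; omega⟩
    · rcases List.sublist_cons_iff.mp h2 with h2' | ⟨r2, rfl, h2'⟩
      · obtain ⟨c, hc1, hc2, hle⟩ := ih r1 σ2 h1' h2'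
        exact ⟨c, hc1.cons a, hc2, by simp at hle ⊢; omega⟩
      · obtain ⟨c, hc1, hc2, hle⟩ := ih r1 r2 h1' h2'
        exact ⟨a :: c, hc1.cons₂ a, hc2.cons₂ a, by simp at hle ⊢; omega⟩

/-- The length of a shortest common supersequence plus the length of a longest common
subsequence of σ1 and σ2 equals |σ1| + |σ2|. -/
theorem scs_add_lcs_eq {A : Type*} (σ1 σ2 : List A) :
    sInf {m : ℕ | ∃ τ : List A, σ1.Sublist τ ∧ σ2.Sublist τ ∧ τ.length = m} +
      sSup {m : ℕ | ∃ c : List A, c.Sublist σ1 ∧ c.Sublist σ2 ∧ c.length = m} =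
      σ1.length + σ2.length := by
  set S := {m : ℕ | ∃ τ : List A, σ1.Sublist τ ∧ σ2.Sublist τ ∧ τ.length = m}
  set C := {m : ℕ | ∃ c : List A, c.Sublist σ1 ∧ c.Sublist σ2 ∧ c.length = m}
  have hSne : S.Nonempty :=
    ⟨(σ1 ++ σ2).length, σ1 ++ σ2, List.sublist_append_left _ _,
      List.sublist_append_right _ _, rfl⟩
  have hCne : C.Nonempty := ⟨0, [], List.nil_sublist _, List.nil_sublist _, rfl⟩
  have hCbdd : BddAbove C := by
    refine ⟨σ1.length, fun m hm => ?_⟩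
    obtain ⟨c, hc1, _, rfl⟩ := hm
    exact hc1.length_le
  obtain ⟨τ, hτ1, hτ2, hτlen⟩ := Nat.sInf_mem hSne
  obtain ⟨c, hc1, hc2, hclen⟩ := Nat.sSup_mem hCne hCbdd
  -- upper bound: sInf S + sSup C ≤ |σ1| + |σ2|
  obtain ⟨τ', hτ'1, hτ'2, hτ'len⟩ := merge_along c σ1 σ2 hc1 hc2
  have h1 : sInf S ≤ τ'.length := Nat.sInf_le ⟨τ', hτ'1, hτ'2, rfl⟩
  -- lower bound
  obtain ⟨c', hc'1, hc'2, hc'le⟩ := extract_common τ σ1 σ2 hτ1 hτ2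
  have h2 : c'.length ≤ sSup C := le_csSup hCbdd ⟨c', hc'1, hc'2, rfl⟩
  omega
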